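/- Let r ≥ 2 be a fixed integer. Let (G_n) be a sequence of graphs where G_n has n vertices, every vertex of G_n has degree (1 + o(1))·d_n, every pair of distinct vertices of G_n has codegree (1 + o(1))·d_n²/n, and d_n²/(n·log n) → ∞. Then for every ε > 0 and all sufficiently large n, κ_{r,2}(G_n) ≥ (1 − 1/r − ε)·d_n²/n. -/

import Mathlib

open Filter

noncomputable section
open scoped Classical

/-- `HasAltConn G r ℓ t`: there is an `r`-edge-coloring of `G` (a color in `Fin r` for every
potential edge; only values on actual edges matter) such that every pair of distinct vertices
is joined by `t` pairwise internally disjoint alternating paths of length `ℓ`. -/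
def HasAltConn {V : Type*} (G : SimpleGraph V) (r ℓ t : ℕ) : Prop :=
  ∃ c : Sym2 V → Fin r, ∀ u v : V, u ≠ v →
    ∃ f : Fin t → G.Walk u v,
      Function.Injective f ∧
      (∀ i, (f i).IsPath ∧ (f i).length = ℓ ∧
        List.Chain' (fun e e' => c e ≠ c e') (f i).edges) ∧
      (∀ i j, i ≠ j → ∀ x, x ∈ (f i).support.tail.dropLast → x ∉ (f j).support.tail.dropLast)

/-- The alternating connectivity `κ_{r,ℓ}(G)`. -/
def altConn {V : Type*} (G : SimpleGraph V) (r ℓ : ℕ) : ℕ :=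
  sSup {t | HasAltConn G r ℓ t}


open Finset SimpleGraph

lemma log_ineq {ε p : ℝ} (hε : 0 < ε) (hε1 : ε ≤ 1) (hp : 0 < p) (hp2 : p ≤ 1/2) :
    p * ε + ε^2/4 ≤ (p + ε) * Real.log (1 + ε) := by
  have h1 : (0:ℝ) < 1 + ε := by linarith
  have hlog : ε / (1 + ε) ≤ Real.log (1 + ε) := by
    have := Real.log_le_sub_one_of_pos (x := (1+ε)⁻¹) (by positivity)
    rw [Real.log_inv] at this
    have h2 : (1+ε)⁻¹ - 1 = -(ε/(1+ε)) := by field_simp; ring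
    linarith [this, h2 ▸ this]
  have key : p * ε + ε^2/4 ≤ (p + ε) * (ε / (1 + ε)) := by
    rw [mul_div_assoc', le_div_iff₀ h1]
    nlinarith [sq_nonneg ε, mul_pos hε hε]
  calc p * ε + ε^2/4 ≤ (p + ε) * (ε / (1 + ε)) := key
    _ ≤ (p + ε) * Real.log (1 + ε) := by
        apply mul_le_mul_of_nonneg_left hlog (by linarith)

lemma walk_len2 {V : Type*} {G : SimpleGraph V} {u v : V} (w : G.Walk u v) (h : w.length = 2) :
    ∃ x, ∃ (h1 : G.Adj u x) (h2 : G.Adj x v),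
      w = SimpleGraph.Walk.cons h1 (SimpleGraph.Walk.cons h2 SimpleGraph.Walk.nil) := by
  cases w with
  | nil => simp at h
  | cons h1 p =>
    cases p with
    | nil => simp at h
    | cons h2 q =>
      cases q with
      | nil => exact ⟨_, h1, h2, rfl⟩
      | cons h3 q' => simp [SimpleGraph.Walk.length_cons] at h

lemma sum_prod_split {K A ι : Type*} [Fintype K] [DecidableEq K] [Fintype A] [Fintype ι]
    (k : ι × Fin 2 → K) (hk : Function.Injective k) (F : ι → A → A → ℝ) :
    ∑ c : K → A, ∏ w : ι, F w (c (k (w, 0))) (c (k (w, 1))) =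
      (Fintype.card A : ℝ) ^ (Fintype.card K - 2 * Fintype.card ι) *
        ∏ w : ι, ∑ a : A, ∑ b : A, F w a b := by
  classical
  set p : K → Prop := fun x => x ∈ Set.range k with hp
  have h1 : ∑ c : K → A, ∏ w : ι, F w (c (k (w, 0))) (c (k (w, 1)))
      = ∑ gh : ((i : {x // p x}) → A) × ((i : {x // ¬ p x}) → A),
          ∏ w : ι, F w (gh.1 ⟨k (w,0), ⟨(w,0), rfl⟩⟩) (gh.1 ⟨k (w,1), ⟨(w,1), rfl⟩⟩) := by
    rw [← Equiv.sum_comp (Equiv.piEquivPiSubtypeProd p (fun _ => A)).symm]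
    apply Fintype.sum_congr
    intro gh
    apply Finset.prod_congr rfl
    intro w _
    rw [show ((Equiv.piEquivPiSubtypeProd p (fun _ => A)).symm gh) = fun x =>
      if h : p x then gh.1 ⟨x, h⟩ else gh.2 ⟨x, h⟩ from rfl]
    beta_reduce
    split_ifs with h0 h1
    · rfl
    · exact absurd ⟨(w,1), rfl⟩ h1
    · exact absurd ⟨(w,0), rfl⟩ h0
    · exact absurd ⟨(w,0), rfl⟩ h0
  rw [h1, Fintype.sum_prod_type]
  -- inner sum over second component is constant
  have h2 : ∀ g : (i : {x // p x}) → A,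
      (∑ _h : (i : {x // ¬ p x}) → A,
        ∏ w : ι, F w (g ⟨k (w,0), ⟨(w,0), rfl⟩⟩) (g ⟨k (w,1), ⟨(w,1), rfl⟩⟩)) =
      (Fintype.card A : ℝ) ^ (Fintype.card K - 2 * Fintype.card ι) *
        ∏ w : ι, F w (g ⟨k (w,0), ⟨(w,0), rfl⟩⟩) (g ⟨k (w,1), ⟨(w,1), rfl⟩⟩) := by
    intro g
    rw [Finset.sum_const, Finset.card_univ, nsmul_eq_mul]
    congr 1
    have hc : Fintype.card {x // p x} = 2 * Fintype.card ι := by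
      rw [show Fintype.card {x // p x} = Fintype.card (ι × Fin 2) from
        (Fintype.card_congr (Equiv.ofInjective k hk).symm)]
      simp [Fintype.card_prod, mul_comm]
    rw [Fintype.card_fun, Fintype.card_subtype_compl, hc]
    push_cast
    rfl
  simp_rw [h2]
  rw [← Finset.mul_sum]
  congr 1
  -- now reindex g over {x // p x} → A by (ι × Fin 2 → A)
  have h3 : ∑ g : (i : {x // p x}) → A,
      ∏ w : ι, F w (g ⟨k (w,0), ⟨(w,0), rfl⟩⟩) (g ⟨k (w,1), ⟨(w,1), rfl⟩⟩)
      = ∑ g' : ι × Fin 2 → A, ∏ w : ι, F w (g' (w,0)) (g' (w,1)) := by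
    rw [← Equiv.sum_comp (Equiv.arrowCongr (Equiv.ofInjective k hk) (Equiv.refl A))]
    apply Fintype.sum_congr
    intro g'
    apply Finset.prod_congr rfl
    intro w _
    have key : ∀ i : Fin 2,
        (Equiv.arrowCongr (Equiv.ofInjective k hk) (Equiv.refl A)) g' ⟨k (w,i), ⟨(w,i), rfl⟩⟩
          = g' (w, i) := by
      intro i
      simp only [Equiv.arrowCongr_apply, Function.comp_apply, Equiv.refl_apply]
      congr 1
      exact Equiv.ofInjective_symm_apply hk (w, i)
    rw [key 0, key 1]
  rw [h3]
  -- finally product-sum exchange via functions ι → A × A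
  have h4 : ∑ g' : ι × Fin 2 → A, ∏ w : ι, F w (g' (w,0)) (g' (w,1))
      = ∑ h : ι → A × A, ∏ w : ι, F w (h w).1 (h w).2 := by
    rw [← Equiv.sum_comp (((Equiv.arrowCongr (Equiv.refl ι) (finTwoArrowEquiv A)).symm).trans
        (Equiv.curry ι (Fin 2) A).symm)]
    apply Fintype.sum_congr
    intro h
    apply Finset.prod_congr rfl
    intro w _
    rfl
  rw [h4]
  rw [show (∏ w : ι, ∑ a : A, ∑ b : A, F w a b) = ∏ w : ι, ∑ ab : A × A, F w ab.1 ab.2 by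
    apply Finset.prod_congr rfl; intro w _; rw [Fintype.sum_prod_type]]
  rw [Finset.prod_univ_sum (fun _ => (Finset.univ : Finset (A × A)))
    (fun w ab => F w ab.1 ab.2), Fintype.piFinset_univ]

lemma bad_card_le {n r : ℕ} (hr : 2 ≤ r) (G : SimpleGraph (Fin n)) (u v : Fin n) (huv : u ≠ v)
    {ε : ℝ} (hε : 0 < ε) (hε1 : ε ≤ 1) :
    ((Finset.univ.filter (fun c : Sym2 (Fin n) → Fin r =>
      (1/(r:ℝ) + ε) * (((G.neighborFinset u ∩ G.neighborFinset v)).card : ℝ) ≤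
        ((((G.neighborFinset u ∩ G.neighborFinset v)).filter
          (fun w => c s(u,w) = c s(w,v))).card : ℝ))).card : ℝ)
      ≤ (r : ℝ) ^ (Fintype.card (Sym2 (Fin n))) *
          Real.exp (-(ε^2/4) * (((G.neighborFinset u ∩ G.neighborFinset v)).card : ℝ)) := by
  classical
  set W : Finset (Fin n) := G.neighborFinset u ∩ G.neighborFinset v with hW
  set m : ℕ := W.card with hm
  set X : (Sym2 (Fin n) → Fin r) → ℕ :=
    fun c => (W.filter (fun w => c s(u,w) = c s(w,v))).card with hX
  set K : ℕ := Fintype.card (Sym2 (Fin n)) with hK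
  have hrR : (0:ℝ) < r := by positivity
  have hadj : ∀ w ∈ W, G.Adj u w ∧ G.Adj w v := by
    intro w hw
    rw [hW, Finset.mem_inter, mem_neighborFinset, mem_neighborFinset] at hw
    exact ⟨hw.1, hw.2.symm⟩
  -- the key injection
  set k : (↥W) × Fin 2 → Sym2 (Fin n) :=
    fun p => if p.2 = 0 then s(u, (p.1 : Fin n)) else s((p.1 : Fin n), v) with hk
  have hkinj : Function.Injective k := by
    rintro ⟨⟨w, hw⟩, i⟩ ⟨⟨w', hw'⟩, i'⟩ h
    obtain ⟨hw1, hw2⟩ := hadj w hw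
    obtain ⟨hw1', hw2'⟩ := hadj w' hw'
    have hwv : w ≠ v := hw2.ne
    have hwv' : w' ≠ v := hw2'.ne
    have hwu : u ≠ w := hw1.ne
    have hwu' : u ≠ w' := hw1'.ne
    fin_cases i <;> fin_cases i' <;> simp only [hk] at h <;> norm_num at h
    · rcases h with h | ⟨h1, -⟩
      · subst h; rfl
      · exact absurd h1 hwu'
    · rcases h with ⟨-, h2⟩ | ⟨h1, -⟩
      · exact absurd h2 hwv
      · exact absurd h1 huv
    · rcases h with ⟨h1, -⟩ | ⟨-, h2⟩
      · exact absurd h1.symm hwu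
      · exact absurd h2.symm huv
    · rcases h with h | ⟨h1, -⟩
      · subst h; rfl
      · exact absurd h1 hwv
  have hcard2 : 2 * Fintype.card ↥W ≤ K := by
    have := Fintype.card_le_of_injective k hkinj
    simpa [Fintype.card_prod, Fintype.card_coe, mul_comm] using this
  have hmcard : Fintype.card ↥W = m := Fintype.card_coe W
  -- moment computation
  have hsum : ∑ c : Sym2 (Fin n) → Fin r, ((1+ε) ^ (X c) : ℝ)
      = (r:ℝ) ^ (K - 2*m) * ((r:ℝ) * ((r:ℝ) + ε)) ^ m := by
    have heq : ∀ c : Sym2 (Fin n) → Fin r,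
        ((1+ε) ^ (X c) : ℝ) =
          ∏ w : ↥W, (fun (w : ↥W) (a b : Fin r) => if a = b then (1+ε) else (1:ℝ)) w
            (c (k (w, 0))) (c (k (w, 1))) := by
      intro c
      rw [Finset.univ_eq_attach]
      have : ∀ w : ↥W, (fun (w : ↥W) (a b : Fin r) => if a = b then (1+ε) else (1:ℝ)) w
            (c (k (w, 0))) (c (k (w, 1)))
          = if c s(u, (w : Fin n)) = c s((w : Fin n), v) then (1+ε) else 1 := by
        intro w; simp [hk]
      rw [Finset.prod_congr rfl (fun w _ => this w)]
      rw [Finset.prod_attach W (fun w => if c s(u,w) = c s(w,v) then (1+ε) else (1:ℝ))]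
      rw [Finset.prod_ite _ _, Finset.prod_const, Finset.prod_const, one_pow, mul_one]
    have hs := sum_prod_split (K := Sym2 (Fin n)) (A := Fin r) k hkinj
      (fun (_ : ↥W) (a b : Fin r) => if a = b then (1+ε) else (1:ℝ))
    rw [Finset.sum_congr rfl (fun c _ => heq c), hs]
    have hinner : ∀ w : ↥W, (∑ a : Fin r, ∑ b : Fin r,
        (if a = b then (1+ε) else (1:ℝ))) = (r:ℝ) * ((r:ℝ) + ε) := by
      intro w
      have : ∀ a : Fin r, (∑ b : Fin r, (if a = b then (1+ε) else (1:ℝ)))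
          = (r:ℝ) + ε := by
        intro a
        have : ∀ b : Fin r, (if a = b then (1+ε) else (1:ℝ)) = 1 + (if a = b then ε else 0) := by
          intro b; split_ifs <;> ring
        rw [Finset.sum_congr rfl (fun b _ => this b), Finset.sum_add_distrib,
          Finset.sum_const, Finset.sum_ite_eq]
        simp [Finset.card_univ]
      rw [Finset.sum_congr rfl (fun a _ => this a), Finset.sum_const]
      simp only [Finset.card_univ, Fintype.card_fin, nsmul_eq_mul]
      try ring
    rw [Finset.prod_congr rfl (fun w _ => hinner w), Finset.prod_const]
    simp [Fintype.card_fin, hmcard, Finset.card_univ]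
    rfl
  -- Markov inequality
  set B := Finset.univ.filter (fun c : Sym2 (Fin n) → Fin r =>
      (1/(r:ℝ) + ε) * (m:ℝ) ≤ (X c : ℝ)) with hB
  set κ : ℝ := (1/(r:ℝ) + ε) * (m:ℝ) with hκ
  have hlam : (1:ℝ) < 1 + ε := by linarith
  have hκpos : (0:ℝ) < (1+ε) ^ κ := Real.rpow_pos_of_pos (by linarith) κ
  have hmono : ∀ c ∈ B, ((1+ε):ℝ) ^ κ ≤ ((1+ε):ℝ) ^ (X c : ℕ) := by
    intro c hc
    rw [← Real.rpow_natCast (1+ε) (X c)]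
    exact (Real.rpow_le_rpow_left_iff hlam).mpr (Finset.mem_filter.mp hc).2
  have hmarkov : (B.card : ℝ) * (1+ε) ^ κ ≤ (r:ℝ) ^ (K - 2*m) * ((r:ℝ) * ((r:ℝ) + ε)) ^ m := by
    calc (B.card:ℝ) * (1+ε) ^ κ = ∑ _c ∈ B, ((1+ε):ℝ) ^ κ := by
          rw [Finset.sum_const, nsmul_eq_mul]
      _ ≤ ∑ c ∈ B, ((1+ε):ℝ) ^ (X c) := Finset.sum_le_sum hmono
      _ ≤ ∑ c : Sym2 (Fin n) → Fin r, ((1+ε):ℝ) ^ (X c) :=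
          Finset.sum_le_sum_of_subset_of_nonneg (Finset.subset_univ B)
            (fun c _ _ => by positivity)
      _ = _ := hsum
  have hm2K : 2 * m ≤ K := by rw [← hmcard]; exact hcard2
  have hring : (r:ℝ) ^ (K - 2*m) * ((r:ℝ) * ((r:ℝ) + ε)) ^ m
      = (r:ℝ) ^ K * (1 + ε/(r:ℝ)) ^ m := by
    rw [pow_sub₀ _ (ne_of_gt hrR) hm2K]
    have h1 : (1 + ε/(r:ℝ)) = ((r:ℝ) + ε)/(r:ℝ) := by field_simp
    rw [h1, div_pow, mul_pow, two_mul, pow_add]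
    field_simp
  have hp : (0:ℝ) < 1/(r:ℝ) := by positivity
  have hp2 : 1/(r:ℝ) ≤ 1/2 := by
    apply one_div_le_one_div_of_le (by norm_num)
    exact_mod_cast hr
  have hli := log_ineq hε hε1 hp hp2
  have hm0 : (0:ℝ) ≤ (m:ℝ) := Nat.cast_nonneg m
  have hexp1 : (1 + ε/(r:ℝ)) ^ m ≤ Real.exp ((ε/(r:ℝ)) * m) := by
    have h1 : (1 + ε/(r:ℝ)) ≤ Real.exp (ε/(r:ℝ)) := by
      have := Real.add_one_le_exp (ε/(r:ℝ)); linarith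
    calc (1 + ε/(r:ℝ)) ^ m ≤ (Real.exp (ε/(r:ℝ))) ^ m :=
          pow_le_pow_left₀ (by positivity) h1 m
      _ = Real.exp ((ε/(r:ℝ)) * m) := by rw [← Real.exp_nat_mul]; ring_nf
  have hA : (1 + ε/(r:ℝ)) ^ m / ((1+ε):ℝ) ^ κ ≤ Real.exp (-(ε^2/4) * m) := by
    have hden : ((1+ε):ℝ) ^ κ = Real.exp (Real.log (1+ε) * κ) :=
      Real.rpow_def_of_pos (by linarith) κ
    rw [hden, div_le_iff₀ (Real.exp_pos _), ← Real.exp_add]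
    refine hexp1.trans (Real.exp_le_exp.mpr ?_)
    have hmul := mul_le_mul_of_nonneg_right hli hm0
    rw [hκ]
    ring_nf at hmul ⊢
    linarith [hmul]
  have h2 : (B.card:ℝ) ≤ (r:ℝ) ^ K * (1 + ε/(r:ℝ)) ^ m / (1+ε) ^ κ := by
    rw [le_div_iff₀ hκpos, ← hring]
    exact hmarkov
  refine h2.trans ?_
  calc (r:ℝ) ^ K * (1 + ε/(r:ℝ)) ^ m / (1+ε) ^ κ
      = (r:ℝ) ^ K * ((1 + ε/(r:ℝ)) ^ m / (1+ε) ^ κ) := by ring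
    _ ≤ (r:ℝ) ^ K * Real.exp (-(ε^2/4) * m) :=
        mul_le_mul_of_nonneg_left hA (by positivity)

lemma good_coloring {n r : ℕ} (hr : 2 ≤ r) (G : SimpleGraph (Fin n)) {ε₀ q : ℝ}
    (hε : 0 < ε₀) (hε1 : ε₀ ≤ 1) (hn : 1 ≤ n)
    (hq : ∀ u v : Fin n, u ≠ v →
      (1 - ε₀) * q ≤ ((G.neighborFinset u ∩ G.neighborFinset v).card : ℝ))
    (hlarge : 2 * Real.log n < (ε₀^2/4) * ((1 - ε₀) * q)) :
    ∃ c : Sym2 (Fin n) → Fin r, ∀ u v : Fin n, u ≠ v →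
      ((((G.neighborFinset u ∩ G.neighborFinset v)).filter
          (fun w => c s(u,w) = c s(w,v))).card : ℝ) <
        (1/(r:ℝ) + ε₀) * (((G.neighborFinset u ∩ G.neighborFinset v)).card : ℝ) := by
  classical
  set K : ℕ := Fintype.card (Sym2 (Fin n)) with hK
  set Bad : Fin n × Fin n → Finset (Sym2 (Fin n) → Fin r) := fun p =>
    Finset.univ.filter (fun c : Sym2 (Fin n) → Fin r =>
      (1/(r:ℝ) + ε₀) * (((G.neighborFinset p.1 ∩ G.neighborFinset p.2)).card : ℝ) ≤
        ((((G.neighborFinset p.1 ∩ G.neighborFinset p.2)).filter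
          (fun w => c s(p.1,w) = c s(w,p.2))).card : ℝ)) with hBad
  set AllBad : Finset (Sym2 (Fin n) → Fin r) :=
    Finset.univ.filter (fun c => ∃ u v : Fin n, u ≠ v ∧
      (1/(r:ℝ) + ε₀) * (((G.neighborFinset u ∩ G.neighborFinset v)).card : ℝ) ≤
        ((((G.neighborFinset u ∩ G.neighborFinset v)).filter
          (fun w => c s(u,w) = c s(w,v))).card : ℝ)) with hAllBad
  have hsubset : AllBad ⊆ (Finset.univ.offDiag).biUnion Bad := by
    intro c hc
    rw [hAllBad, Finset.mem_filter] at hc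
    obtain ⟨-, u, v, huv, hle⟩ := hc
    rw [Finset.mem_biUnion]
    exact ⟨(u, v), by simp [Finset.mem_offDiag, huv], by
      rw [hBad]; exact Finset.mem_filter.mpr ⟨Finset.mem_univ _, hle⟩⟩
  have hEbound : ∀ p ∈ Finset.univ.offDiag (α := Fin n), ((Bad p).card : ℝ) ≤
      (r:ℝ)^K * Real.exp (-(ε₀^2/4) * ((1 - ε₀) * q)) := by
    rintro ⟨u, v⟩ hp
    rw [Finset.mem_offDiag] at hp
    have huv : u ≠ v := hp.2.2
    refine (bad_card_le hr G u v huv hε hε1).trans ?_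
    apply mul_le_mul_of_nonneg_left _ (by positivity)
    apply Real.exp_le_exp.mpr
    have := hq u v huv
    nlinarith [this, sq_nonneg ε₀]
  have hn0 : (0:ℝ) < n := by exact_mod_cast hn
  have hcard : (AllBad.card : ℝ) < (r:ℝ)^K := by
    have h1 : (AllBad.card : ℝ) ≤ (Finset.univ.offDiag (α := Fin n)).card *
        ((r:ℝ)^K * Real.exp (-(ε₀^2/4) * ((1 - ε₀) * q))) := by
      calc (AllBad.card : ℝ) ≤ (((Finset.univ.offDiag).biUnion Bad).card : ℝ) := by
            exact_mod_cast Finset.card_le_card hsubset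
        _ ≤ ∑ p ∈ Finset.univ.offDiag, ((Bad p).card : ℝ) := by
            exact_mod_cast Finset.card_biUnion_le
        _ ≤ _ := by
            rw [← nsmul_eq_mul]
            exact Finset.sum_le_card_nsmul _ _ _ hEbound
    have h2 : ((Finset.univ.offDiag (α := Fin n)).card : ℝ) ≤ (n:ℝ)^2 := by
      have hoff : (Finset.univ.offDiag (α := Fin n)).card = n*n - n := by
        rw [Finset.offDiag_card, Finset.card_univ, Fintype.card_fin]
      have : (Finset.univ.offDiag (α := Fin n)).card ≤ n^2 := by
        rw [hoff, pow_two]; omega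
      have h2' := (Nat.cast_le (α := ℝ)).mpr this
      push_cast at h2'
      exact h2'
    have h3 : (n:ℝ)^2 * Real.exp (-(ε₀^2/4) * ((1 - ε₀) * q)) < 1 := by
      have hn2 : (n:ℝ)^2 = Real.exp (2 * Real.log n) := by
        have he : Real.exp (2 * Real.log n) = (Real.exp (Real.log n))^(2:ℕ) := by
          rw [← Real.exp_nat_mul]; norm_num
        rw [he, Real.exp_log hn0]
      rw [hn2, ← Real.exp_add]
      have h0 : 2 * Real.log n + (-(ε₀^2/4) * ((1 - ε₀) * q)) < 0 := by linarith
      calc Real.exp (2 * Real.log n + (-(ε₀^2/4) * ((1 - ε₀) * q))) < Real.exp 0 :=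
            Real.exp_lt_exp.mpr h0
        _ = 1 := Real.exp_zero
    calc (AllBad.card : ℝ) ≤ (Finset.univ.offDiag (α := Fin n)).card *
        ((r:ℝ)^K * Real.exp (-(ε₀^2/4) * ((1 - ε₀) * q))) := h1
      _ ≤ (n:ℝ)^2 * ((r:ℝ)^K * Real.exp (-(ε₀^2/4) * ((1 - ε₀) * q))) := by
          apply mul_le_mul_of_nonneg_right h2 (by positivity)
      _ = ((n:ℝ)^2 * Real.exp (-(ε₀^2/4) * ((1 - ε₀) * q))) * (r:ℝ)^K := by ring
      _ < 1 * (r:ℝ)^K := by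
          apply mul_lt_mul_of_pos_right h3 (by positivity)
      _ = (r:ℝ)^K := one_mul _
  -- extract a good coloring
  have hne : ∃ c : Sym2 (Fin n) → Fin r, c ∉ AllBad := by
    by_contra hcon
    push_neg at hcon
    have : (Finset.univ : Finset (Sym2 (Fin n) → Fin r)) ⊆ AllBad := fun c _ => hcon c
    have hle := Finset.card_le_card this
    rw [Finset.card_univ, Fintype.card_fun, Fintype.card_fin] at hle
    have : ((r^K : ℕ) : ℝ) ≤ (AllBad.card : ℝ) := by exact_mod_cast hle
    rw [Nat.cast_pow] at this
    linarith
  obtain ⟨c, hc⟩ := hne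
  refine ⟨c, fun u v huv => ?_⟩
  rw [hAllBad, Finset.mem_filter] at hc
  push_neg at hc
  exact hc (Finset.mem_univ c) u v huv

lemma hasAltConn_of_good {n r : ℕ} (G : SimpleGraph (Fin n)) (c : Sym2 (Fin n) → Fin r) (t : ℕ)
    (h : ∀ u v : Fin n, u ≠ v → t ≤ ((G.neighborFinset u ∩ G.neighborFinset v).filter
        (fun w => ¬ (c s(u,w) = c s(w,v)))).card) :
    HasAltConn G r 2 t := by
  refine ⟨c, fun u v huv => ?_⟩
  obtain ⟨s, hs, hscard⟩ := Finset.exists_subset_card_eq (h u v huv)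
  set e := s.equivFin with he
  set inj : Fin t → Fin n := fun i => (e.symm (Fin.cast hscard.symm i) : Fin n) with hinj
  have hinjective : Function.Injective inj := by
    intro i j hij
    have h2 := e.symm.injective (Subtype.ext hij)
    have h3 := congrArg Fin.val h2
    simpa [Fin.ext_iff] using h3
  have hprop : ∀ i, G.Adj u (inj i) ∧ G.Adj (inj i) v ∧ c s(u, inj i) ≠ c s(inj i, v) := by
    intro i
    have hmem := hs (e.symm (Fin.cast hscard.symm i)).2
    rw [Finset.mem_filter, Finset.mem_inter, mem_neighborFinset, mem_neighborFinset] at hmem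
    exact ⟨hmem.1.1, hmem.1.2.symm, hmem.2⟩
  refine ⟨fun i => SimpleGraph.Walk.cons (hprop i).1
    (SimpleGraph.Walk.cons (hprop i).2.1 SimpleGraph.Walk.nil), ?_, ?_, ?_⟩
  · intro i j hij
    have hsup := congrArg SimpleGraph.Walk.support hij
    simp only [SimpleGraph.Walk.support_cons, SimpleGraph.Walk.support_nil,
      List.cons.injEq, and_true, true_and] at hsup
    exact hinjective hsup
  · intro i
    obtain ⟨h1, h2, h3⟩ := hprop i
    refine ⟨?_, by simp, ?_⟩
    · rw [SimpleGraph.Walk.isPath_def]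
      simp only [SimpleGraph.Walk.support_cons, SimpleGraph.Walk.support_nil]
      simp [List.nodup_cons, h1.ne, huv, h2.ne]
    · simp only [SimpleGraph.Walk.edges_cons, SimpleGraph.Walk.edges_nil,
        List.isChain_cons_cons, List.isChain_singleton, and_true]
      exact List.isChain_pair.mpr h3
  · intro i j hij x hx
    simp only [SimpleGraph.Walk.support_cons, SimpleGraph.Walk.support_nil,
      List.tail_cons, List.dropLast] at hx ⊢
    intro hx'
    simp only [List.mem_singleton] at hx hx'
    exact hij (hinjective (hx ▸ hx'))

lemma altConn_upper {n r t : ℕ} (hn : 2 ≤ n) {G : SimpleGraph (Fin n)}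
    (ht : HasAltConn G r 2 t) : t ≤ n := by
  obtain ⟨c, hc⟩ := ht
  have h01 : (⟨0, by omega⟩ : Fin n) ≠ ⟨1, by omega⟩ := by simp [Fin.ext_iff]
  obtain ⟨f, hfinj, hprops, hdisj⟩ := hc _ _ h01
  have hmid : ∀ i, ∃ x, (f i).support.tail.dropLast = [x] := by
    intro i
    obtain ⟨x, h1, h2, hfi⟩ := walk_len2 (f i) (hprops i).2.1
    refine ⟨x, ?_⟩
    rw [hfi]
    simp [SimpleGraph.Walk.support_cons, List.dropLast]
  choose φ hφ using hmid
  have hφinj : Function.Injective φ := by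
    intro i j hij
    by_contra hne
    have hxi : φ i ∈ (f i).support.tail.dropLast := by rw [hφ i]; simp
    have hxj : φ j ∈ (f j).support.tail.dropLast := by rw [hφ j]; simp
    have := hdisj i j hne (φ i) hxi
    rw [hij] at this
    exact this hxj
  calc t = Fintype.card (Fin t) := (Fintype.card_fin t).symm
    _ ≤ Fintype.card (Fin n) := Fintype.card_le_of_injective φ hφinj
    _ = n := Fintype.card_fin n

set_option maxHeartbeats 2000000

/-- if every vertex of `G_n` has degree `(1+o(1))d_n`, every pair of distinct
vertices has codegree `(1+o(1))d_n²/n`, and `d_n²/(n log n) → ∞`, then for fixed `r ≥ 2`,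
for every `ε > 0` and all large `n`, `κ_{r,2}(G_n) ≥ (1 - 1/r - ε)d_n²/n`. -/
theorem altConn_length_two_lower (r : ℕ) (hr : 2 ≤ r)
    (G : ∀ n : ℕ, SimpleGraph (Fin n)) (d : ℕ → ℝ)
    (hdeg : ∀ ε > (0 : ℝ), ∀ᶠ n : ℕ in atTop, ∀ v : Fin n,
      |((G n).degree v : ℝ) - d n| ≤ ε * d n)
    (hcodeg : ∀ ε > (0 : ℝ), ∀ᶠ n : ℕ in atTop, ∀ u v : Fin n, u ≠ v →
      |((((G n).neighborFinset u) ∩ ((G n).neighborFinset v)).card : ℝ) - d n ^ 2 / n| ≤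
        ε * (d n ^ 2 / n))
    (hgrow : Tendsto (fun n : ℕ => d n ^ 2 / ((n : ℝ) * Real.log n)) atTop atTop) :
    ∀ ε > (0 : ℝ), ∀ᶠ n : ℕ in atTop,
      (1 - 1 / (r : ℝ) - ε) * (d n ^ 2 / n) ≤ (altConn (G n) r 2 : ℝ) := by
  have hrR : (2:ℝ) ≤ (r:ℝ) := by exact_mod_cast hr
  have hr0 : (0:ℝ) < (r:ℝ) := by linarith
  intro ε hε
  set ε' : ℝ := min ε (1/2) with hε'def
  have hε'pos : 0 < ε' := lt_min hε (by norm_num)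
  have hε'le : ε' ≤ 1/2 := min_le_right _ _
  have hε'ε : ε' ≤ ε := min_le_left _ _
  set ε₀ : ℝ := ε'/2 with hε₀def
  have hε₀pos : 0 < ε₀ := by positivity
  have hε₀le : ε₀ ≤ 1/4 := by rw [hε₀def]; linarith
  have E1 := hcodeg ε₀ hε₀pos
  have E2 := hgrow.eventually_ge_atTop (17/ε₀^2)
  have E3 : ∀ᶠ n : ℕ in atTop, 3 ≤ n := eventually_ge_atTop 3
  filter_upwards [E1, E2, E3] with n h1 h2 h3
  set q : ℝ := d n ^ 2 / n with hqdef
  have hn0 : (0:ℝ) < n := by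
    have : (0:ℕ) < n := by omega
    exact_mod_cast this
  have hlog : 0 < Real.log n := by
    apply Real.log_pos
    have : (1:ℕ) < n := by omega
    exact_mod_cast this
  have hqlog : (17/ε₀^2) * Real.log n ≤ q := by
    have heq : d n ^ 2 / ((n:ℝ) * Real.log n) * Real.log n = q := by
      rw [hqdef]; field_simp
    calc (17/ε₀^2) * Real.log n ≤ (d n ^ 2 / ((n:ℝ) * Real.log n)) * Real.log n :=
          mul_le_mul_of_nonneg_right h2 (le_of_lt hlog)
      _ = q := heq
  have hq0 : (0:ℝ) < q := lt_of_lt_of_le (by positivity) hqlog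
  have hcodegLB : ∀ u v : Fin n, u ≠ v →
      (1-ε₀) * q ≤ ((((G n).neighborFinset u ∩ (G n).neighborFinset v)).card : ℝ) := by
    intro u v huv
    have habs := abs_le.mp (h1 u v huv)
    have := habs.1
    nlinarith [this]
  have hlarge : 2 * Real.log n < (ε₀^2/4) * ((1-ε₀)*q) := by
    have hx : (0:ℝ) ≤ ε₀^2 * q := by positivity
    have hy : ε₀ * (ε₀^2 * q) ≤ (1/4) * (ε₀^2 * q) := mul_le_mul_of_nonneg_right hε₀le hx
    have hstep : (ε₀^2/8) * q ≤ (ε₀^2/4) * ((1-ε₀)*q) := by nlinarith [hx, hy]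
    have hstep2 : (ε₀^2/8) * ((17/ε₀^2) * Real.log n) ≤ (ε₀^2/8) * q :=
      mul_le_mul_of_nonneg_left hqlog (by positivity)
    have hstep3 : (ε₀^2/8) * ((17/ε₀^2) * Real.log n) = (17/8) * Real.log n := by
      field_simp
    nlinarith [hlog]
  obtain ⟨c, hc⟩ := good_coloring hr (G n) hε₀pos (by linarith) (by omega) hcodegLB hlarge
  set T : ℝ := (1 - 1/(r:ℝ) - ε') * q with hT
  set t : ℕ := ⌈T⌉₊ with ht
  have hrhalf : 1/(r:ℝ) ≤ 1/2 := by
    rw [div_le_div_iff₀ hr0 (by norm_num)]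
    linarith
  have hcoef : (0:ℝ) < 1 - 1/(r:ℝ) - ε₀ := by linarith
  have hgood : ∀ u v : Fin n, u ≠ v →
      t ≤ ((((G n).neighborFinset u ∩ (G n).neighborFinset v)).filter
        (fun w => ¬ (c s(u,w) = c s(w,v)))).card := by
    intro u v huv
    set W := (G n).neighborFinset u ∩ (G n).neighborFinset v with hW
    have hXm := hc u v huv
    have hsplit := Finset.card_filter_add_card_filter_not
      (s := W) (fun w => c s(u,w) = c s(w,v))
    rw [Nat.ceil_le]
    have hm := hcodegLB u v huv
    have hcast : ((W.filter (fun w => ¬ (c s(u,w) = c s(w,v)))).card : ℝ)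
        = (W.card : ℝ) - ((W.filter (fun w => c s(u,w) = c s(w,v))).card : ℝ) := by
      have hsplit' := congrArg (fun x : ℕ => (x:ℝ)) hsplit
      push_cast at hsplit'
      linarith
    rw [hcast]
    have hkey : T ≤ (1 - 1/(r:ℝ) - ε₀) * ((W.card:ℝ)) := by
      have step1 : T ≤ (1 - 1/(r:ℝ) - ε₀) * ((1-ε₀)*q) := by
        rw [hT, hε₀def]
        have hA : (0:ℝ) ≤ q * ε'^2 := by positivity
        have hB : (0:ℝ) ≤ q * ε' * (1/(r:ℝ)) := by positivity
        nlinarith [hA, hB]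
      have step2 : (1 - 1/(r:ℝ) - ε₀) * ((1-ε₀)*q) ≤ (1 - 1/(r:ℝ) - ε₀) * (W.card:ℝ) :=
        mul_le_mul_of_nonneg_left hm (le_of_lt hcoef)
      linarith
    nlinarith [hkey, hXm]
  have hHAC : HasAltConn (G n) r 2 t := hasAltConn_of_good (G n) c t hgood
  have hbdd : BddAbove {t' | HasAltConn (G n) r 2 t'} :=
    ⟨n, fun t' ht' => altConn_upper (by omega) ht'⟩
  have hle : t ≤ altConn (G n) r 2 := le_csSup hbdd hHAC
  have hfinal : T ≤ (altConn (G n) r 2 : ℝ) :=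
    le_trans (Nat.le_ceil T) (by exact_mod_cast hle)
  have hmono : (1 - 1/(r:ℝ) - ε) * q ≤ T := by
    rw [hT]
    apply mul_le_mul_of_nonneg_right _ hq0.le
    linarith
  linarith [hfinal, hmono]
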